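/- Let u ≥ 0 be a real number, let j ≥ 3 be an integer with (j+1)·u < 1, and set γₘ := m·u/(1−m·u). Let α, and real numbers c_a, ĉ_a (previous coefficient of same index), c_b, ĉ_b (previous coefficient of index one less), for m = 1,…,j−2 real numbers tₘ with exact coefficients dₘ and computed coefficients d̂ₘ, and a real number w be given; define e_a := ĉ_a − c_a, e_b := ĉ_b − c_b, eₘ := d̂ₘ − dₘ. Suppose the exact value is c = c_a − α·c_b − Σ_{m=1}^{j−2} tₘ·dₘ − w, and the computed value ĉ satisfies (1+ε)·ĉ = ĉ_a·(1+δ) − α·ĉ_b·(1+θ₂) − t₁·d̂₁·(1+θⱼ) − Σ_{m=2}^{j−2} tₘ·d̂ₘ·(1+θ_{j+1}⁽ᵐ⁾) − w·(1+θ̂ⱼ), where |δ| ≤ u, |ε| ≤ u, |θ₂| ≤ γ₂, |θⱼ| ≤ γⱼ, |θ̂ⱼ| ≤ γⱼ, and |θ_{j+1}⁽ᵐ⁾| ≤ γ_{j+1} for each m. Then the error e := ĉ − c satisfies |e| ≤ |e_a| + |α·e_b| + Σ_{m=1}^{j−2} |tₘ·eₘ| + γ_{j+1}·Σ_{m=2}^{j−2}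 |tₘ·d̂ₘ| + γⱼ·(|t₁·d̂₁| + |w|) + u·(|ĉ| + |ĉ_a|) + γ₂·|α·ĉ_b|. -/

import Mathlib

/-- Theorem 5.3 (case 3 ≤ j < i) of the paper: error bound for
`ĉⱼ⁽ⁱ⁾ = fl[fl[ĉⱼ⁽ⁱ⁻¹⁾ − fl[αᵢ ĉⱼ₋₁⁽ⁱ⁻¹⁾]] − fl[Σₘ tₘ ĉ_{j−m−1}⁽ⁱ⁻ᵐ⁻¹⁾ + w]]`,
where `tₘ = h_{i−m,i} βᵢ⋯β_{i−m+1}` and `w = h_{i−j+1,i} βᵢ⋯β_{i−j+2}`. -/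
theorem stmt_10 (u : ℝ) (hu : 0 ≤ u) (j : ℕ) (hj : 3 ≤ j)
    (hju : ((j : ℝ) + 1) * u < 1)
    (α ca cahat cb cbhat w chat c δ ε θ₂ θj θj' : ℝ)
    (t d dhat θ' : ℕ → ℝ)
    (hδ : |δ| ≤ u) (hε : |ε| ≤ u)
    (hθ₂ : |θ₂| ≤ 2 * u / (1 - 2 * u))
    (hθj : |θj| ≤ (j : ℝ) * u / (1 - (j : ℝ) * u))
    (hθj' : |θj'| ≤ (j : ℝ) * u / (1 - (j : ℝ) * u))
    (hθ' : ∀ m ∈ Finset.Icc 2 (j - 2),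
      |θ' m| ≤ ((j : ℝ) + 1) * u / (1 - ((j : ℝ) + 1) * u))
    (hexact : c = ca - α * cb - (∑ m ∈ Finset.Icc 1 (j - 2), t m * d m) - w)
    (hcomp : (1 + ε) * chat = cahat * (1 + δ) - α * cbhat * (1 + θ₂)
      - t 1 * dhat 1 * (1 + θj)
      - (∑ m ∈ Finset.Icc 2 (j - 2), t m * dhat m * (1 + θ' m)) - w * (1 + θj')) :
    |chat - c| ≤ |cahat - ca| + |α * (cbhat - cb)|
      + (∑ m ∈ Finset.Icc 1 (j - 2), |t m * (dhat m - d m)|)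
      + (((j : ℝ) + 1) * u / (1 - ((j : ℝ) + 1) * u))
          * (∑ m ∈ Finset.Icc 2 (j - 2), |t m * dhat m|)
      + ((j : ℝ) * u / (1 - (j : ℝ) * u)) * (|t 1 * dhat 1| + |w|)
      + u * (|chat| + |cahat|)
      + (2 * u / (1 - 2 * u)) * |α * cbhat| := by
  have h1n : (1:ℕ) ∉ Finset.Icc 2 (j-2) := by simp
  have hins : Finset.Icc 1 (j-2) = insert 1 (Finset.Icc 2 (j-2)) := by
    ext m; simp [Finset.mem_Icc, Finset.mem_insert]; omega
  have hd : (∑ m ∈ Finset.Icc 1 (j-2), t m * d m)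
      = t 1 * d 1 + ∑ m ∈ Finset.Icc 2 (j-2), t m * d m := by
    rw [hins, Finset.sum_insert h1n]
  have habs_sum : (∑ m ∈ Finset.Icc 1 (j-2), |t m * (dhat m - d m)|)
      = |t 1 * (dhat 1 - d 1)| + ∑ m ∈ Finset.Icc 2 (j-2), |t m * (dhat m - d m)| := by
    rw [hins, Finset.sum_insert h1n]
  have hθsum : (∑ m ∈ Finset.Icc 2 (j-2), t m * dhat m * (1 + θ' m))
      = (∑ m ∈ Finset.Icc 2 (j-2), t m * (dhat m - d m))
        + (∑ m ∈ Finset.Icc 2 (j-2), θ' m * (t m * dhat m))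
        + (∑ m ∈ Finset.Icc 2 (j-2), t m * d m) := by
    rw [← Finset.sum_add_distrib, ← Finset.sum_add_distrib]
    exact Finset.sum_congr rfl (fun m _ => by ring)
  set X1 := cahat - ca with hX1
  set X2 := -(α * (cbhat - cb)) with hX2
  set X3 := -(t 1 * (dhat 1 - d 1)) - (∑ m ∈ Finset.Icc 2 (j-2), t m * (dhat m - d m)) with hX3
  set X4 := -(∑ m ∈ Finset.Icc 2 (j-2), θ' m * (t m * dhat m)) with hX4
  set X5 := -(θj * (t 1 * dhat 1)) - θj' * w with hX5
  set X6 := -(ε * chat) + δ * cahat with hX6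
  set X7 := -(θ₂ * (α * cbhat)) with hX7
  have key : chat - c = X1 + X2 + X3 + X4 + X5 + X6 + X7 := by
    rw [hX1, hX2, hX3, hX4, hX5, hX6, hX7]
    linear_combination hcomp - hexact - hθsum + hd
  have babs : |X1 + X2 + X3 + X4 + X5 + X6 + X7|
      ≤ |X1| + |X2| + |X3| + |X4| + |X5| + |X6| + |X7| := by
    calc |X1 + X2 + X3 + X4 + X5 + X6 + X7|
        ≤ |X1 + X2 + X3 + X4 + X5 + X6| + |X7| := abs_add_le _ _
      _ ≤ |X1 + X2 + X3 + X4 + X5| + |X6| + |X7| := by gcongr; exact abs_add_le _ _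
      _ ≤ |X1 + X2 + X3 + X4| + |X5| + |X6| + |X7| := by gcongr; exact abs_add_le _ _
      _ ≤ |X1 + X2 + X3| + |X4| + |X5| + |X6| + |X7| := by gcongr; exact abs_add_le _ _
      _ ≤ |X1 + X2| + |X3| + |X4| + |X5| + |X6| + |X7| := by gcongr; exact abs_add_le _ _
      _ ≤ |X1| + |X2| + |X3| + |X4| + |X5| + |X6| + |X7| := by gcongr; exact abs_add_le _ _
  have b3 : |X3| ≤ ∑ m ∈ Finset.Icc 1 (j-2), |t m * (dhat m - d m)| := by
    rw [habs_sum]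
    calc |X3| ≤ |-(t 1 * (dhat 1 - d 1))| + |∑ m ∈ Finset.Icc 2 (j-2), t m * (dhat m - d m)| :=
          abs_sub _ _
      _ ≤ |t 1 * (dhat 1 - d 1)| + ∑ m ∈ Finset.Icc 2 (j-2), |t m * (dhat m - d m)| := by
          rw [abs_neg]; gcongr; exact Finset.abs_sum_le_sum_abs _ _
  have b4 : |X4| ≤ (((j : ℝ) + 1) * u / (1 - ((j : ℝ) + 1) * u))
      * ∑ m ∈ Finset.Icc 2 (j-2), |t m * dhat m| := by
    rw [hX4, abs_neg, Finset.mul_sum]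
    refine (Finset.abs_sum_le_sum_abs _ _).trans (Finset.sum_le_sum fun m hm => ?_)
    rw [abs_mul]
    exact mul_le_mul_of_nonneg_right (hθ' m hm) (abs_nonneg _)
  have b5 : |X5| ≤ ((j : ℝ) * u / (1 - (j : ℝ) * u)) * (|t 1 * dhat 1| + |w|) := by
    calc |X5| ≤ |-(θj * (t 1 * dhat 1))| + |θj' * w| := abs_sub _ _
      _ = |θj| * |t 1 * dhat 1| + |θj'| * |w| := by simp [abs_mul]
      _ ≤ ((j : ℝ) * u / (1 - (j : ℝ) * u)) * |t 1 * dhat 1|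
          + ((j : ℝ) * u / (1 - (j : ℝ) * u)) * |w| :=
          add_le_add (mul_le_mul_of_nonneg_right hθj (abs_nonneg _))
            (mul_le_mul_of_nonneg_right hθj' (abs_nonneg _))
      _ = _ := by ring
  have b6 : |X6| ≤ u * (|chat| + |cahat|) := by
    calc |X6| ≤ |-(ε * chat)| + |δ * cahat| := abs_add_le _ _
      _ = |ε| * |chat| + |δ| * |cahat| := by simp [abs_mul]
      _ ≤ u * |chat| + u * |cahat| :=
          add_le_add (mul_le_mul_of_nonneg_right hε (abs_nonneg _))
            (mul_le_mul_of_nonneg_right hδ (abs_nonneg _))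
      _ = _ := by ring
  have b7 : |X7| ≤ (2 * u / (1 - 2 * u)) * |α * cbhat| := by
    rw [hX7, abs_neg, abs_mul]
    exact mul_le_mul_of_nonneg_right hθ₂ (abs_nonneg _)
  have b1 : |X1| = |cahat - ca| := rfl
  have b2 : |X2| = |α * (cbhat - cb)| := by rw [hX2, abs_neg]
  rw [key]
  refine babs.trans ?_
  rw [b1, b2]
  gcongr
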